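/- Suppose (X; p, q, r) is an outcome of the model with r = 0, q defined by q_i = f_{ij}(p_{ij}) if (i,j) ∈ X and q_i = \tilde q_i otherwise, where \tilde q_i = max{ f_{ij}(p_{ij}) : (i,j) ∈ Ẽ } and each p_{ij} is the largest feasible integer price with f_{ji}(-p_{ij}) ≥ 0 (when one exists). If K = {(i,j) ∈ Ẽ_P : i unmatched in X} is empty, then for all (i,j) ∈ E and all integers c with π_low_{ij} ≤ c ≤ π̄_{ij}, either f_{ij}(c) ≤ q_i or f_{ji}(-c) ≤ r_j. -/
import Mathlib


/-- Lemma 1: with `r = 0`, prices initialized to the largest feasible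
integer price acceptable to the buyer (when one exists), `q` defined from the matching
`X ⊆ Ẽ_P` via `q̃`, and `K = ∅` (every seller appearing in `Ẽ_P` is matched), the
outcome satisfies condition (p2): for every pair and every feasible integer price `c`,
`fS i j c ≤ q i` or `fB i j (-c) ≤ 0 = r j`. -/
theorem stmt_4 {U V : Type*} [Fintype U] [Fintype V]
    (fS fB : U → V → ℤ → ℝ)
    (hfS : ∀ i j, StrictMono (fS i j)) (hfB : ∀ i j, StrictMono (fB i j))
    (p πlow πup : U → V → ℤ)
    (hfeas : ∀ i j, πlow i j ≤ p i j ∧ p i j ≤ πup i j)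
    -- `p i j` is the largest feasible integer price with `fB i j (-(p i j)) ≥ 0`,
    -- when such a feasible price exists:
    (hpmax : ∀ i j, (∃ c : ℤ, πlow i j ≤ c ∧ c ≤ πup i j ∧ 0 ≤ fB i j (-c)) →
      0 ≤ fB i j (-(p i j)) ∧
      ∀ c : ℤ, πlow i j ≤ c → c ≤ πup i j → 0 ≤ fB i j (-c) → c ≤ p i j)
    -- the set `Ẽ` of mutually acceptable pairs:
    (Etil : Set (U × V))
    (hEtil : Etil = {e | 0 ≤ fS e.1 e.2 (p e.1 e.2) ∧ 0 ≤ fB e.1 e.2 (-(p e.1 e.2))})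
    -- `q̃ i = max { fS i j (p i j) | (i,j) ∈ Ẽ }`, the max over the empty set being 0:
    (qtil : U → ℝ)
    (hqtil_ub : ∀ i j, (i, j) ∈ Etil → fS i j (p i j) ≤ qtil i)
    (hqtil_mem : ∀ i, (∃ j, (i, j) ∈ Etil ∧ fS i j (p i j) = qtil i) ∨
      ((∀ j, (i, j) ∉ Etil) ∧ qtil i = 0))
    -- `Ẽ_P`:
    (EP : Set (U × V))
    (hEP : EP = {e ∈ Etil | fS e.1 e.2 (p e.1 e.2) = qtil e.1})
    -- the matching `X ⊆ Ẽ_P`: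
    (X : Set (U × V)) (hXP : X ⊆ EP)
    (hmatch₁ : ∀ i j j', (i, j) ∈ X → (i, j') ∈ X → j = j')
    (hmatch₂ : ∀ i i' j, (i, j) ∈ X → (i', j) ∈ X → i = i')
    -- `K = ∅`: every seller occurring in a pair of `Ẽ_P` is matched in `X`:
    (hK : ∀ i j, (i, j) ∈ EP → ∃ j', (i, j') ∈ X)
    -- the payoff vector `q`:
    (q : U → ℝ)
    (hq : ∀ i j, (i, j) ∈ X → q i = fS i j (p i j))
    (hq0 : ∀ i, (∀ j, (i, j) ∉ X) → q i = qtil i) :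
    ∀ i j, ∀ c : ℤ, πlow i j ≤ c → c ≤ πup i j →
      fS i j c ≤ q i ∨ fB i j (-c) ≤ 0 := by
  intro i j c hlo hhi
  by_cases hB : fB i j (-c) ≤ 0
  · exact Or.inr hB
  push_neg at hB
  obtain ⟨hBp, hmax⟩ := hpmax i j ⟨c, hlo, hhi, hB.le⟩
  have hcp : c ≤ p i j := hmax c hlo hhi hB.le
  have hSc : fS i j c ≤ fS i j (p i j) := (hfS i j).monotone hcp
  -- q i = qtil i in all cases
  have hqeq : q i = qtil i := by
    by_cases hm : ∃ j', (i, j') ∈ X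
    · obtain ⟨j', hj'⟩ := hm
      have hEPj := hXP hj'
      rw [hEP] at hEPj
      rw [hq i j' hj']
      exact hEPj.2
    · push_neg at hm
      exact hq0 i hm
  have hqtil0 : 0 ≤ qtil i := by
    rcases hqtil_mem i with ⟨j0, hj0, heq⟩ | ⟨_, h0⟩
    · rw [hEtil] at hj0
      exact heq ▸ hj0.1
    · rw [h0]
  by_cases hSp : 0 ≤ fS i j (p i j)
  · have hmem : (i, j) ∈ Etil := by rw [hEtil]; exact ⟨hSp, hBp⟩
    exact Or.inl (hqeq ▸ (hSc.trans (hqtil_ub i j hmem)))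
  · push_neg at hSp
    exact Or.inl (hqeq ▸ (hSc.trans (hSp.le.trans hqtil0)))
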